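/- The Weierstrass function f(x) = Σ_{n ≥ 0} b^n cos(a^n π x), where a is an odd integer greater than 1, 0 < b < 1, and ab > 1 + 3π/2, is continuous on ℝ but differentiable at no point of ℝ. -/

import Mathlib

open Real Filter Topology


private lemma abs_sin_le' (t : ℝ) : |Real.sin t| ≤ |t| := by
  have h : ∀ s : ℝ, 0 ≤ s → |Real.sin s| ≤ s := by
    intro s hs
    rcases le_or_gt 1 s with h1 | h1
    · exact (Real.abs_sin_le_one s).trans h1
    · have hsle : s ≤ Real.pi := by nlinarith [Real.pi_gt_three]
      rw [abs_of_nonneg (Real.sin_nonneg_of_nonneg_of_le_pi hs hsle)]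
      exact Real.sin_le hs
  rcases le_or_gt 0 t with ht | ht
  · rw [abs_of_nonneg ht]; exact h t ht
  · rw [abs_of_neg ht]
    calc |Real.sin t| = |Real.sin (-t)| := by rw [Real.sin_neg, abs_neg]
    _ ≤ -t := h (-t) (by linarith)

private lemma cos_lip' (u v : ℝ) : |Real.cos u - Real.cos v| ≤ |u - v| := by
  rw [Real.cos_sub_cos, abs_mul, abs_mul]
  have h1 : |(-2 : ℝ)| = 2 := by norm_num
  calc |(-2:ℝ)| * |Real.sin ((u+v)/2)| * |Real.sin ((u-v)/2)|
      ≤ 2 * 1 * |(u-v)/2| := by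
        rw [h1]
        exact mul_le_mul (mul_le_mul_of_nonneg_left (Real.abs_sin_le_one _) (by norm_num))
          (abs_sin_le' _) (abs_nonneg _) (by norm_num)
  _ = |u - v| := by rw [abs_div, abs_two]; ring

private lemma cos_int_pi' (n : ℤ) : Real.cos (n * Real.pi) = (-1)^n := by
  have h := Real.cos_int_mul_pi_sub 0 n
  simpa using h

private lemma cos_add_int_pi' (θ : ℝ) (n : ℤ) :
    Real.cos (θ + n * Real.pi) = (-1)^n * Real.cos θ := by
  rw [show θ + n*Real.pi = n*Real.pi - (-θ) by ring, Real.cos_int_mul_pi_sub, Real.cos_neg]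

private lemma neg_one_zpow_odd_mul' {c : ℤ} (hc : Odd c) (j : ℤ) :
    ((-1 : ℝ)) ^ (c * j) = (-1) ^ j := by
  rcases Int.even_or_odd j with hj | hj
  · rw [(hj.mul_left c).neg_one_zpow, hj.neg_one_zpow]
  · rw [(hc.mul hj).neg_one_zpow, hj.neg_one_zpow]

private lemma weier_summable {b : ℝ} (hb0 : 0 ≤ b) (hb1 : b < 1) (w : ℕ → ℝ) :
    Summable (fun n => b ^ n * Real.cos (w n)) := by
  apply Summable.of_norm
  apply Summable.of_nonneg_of_le (fun n => norm_nonneg _) (fun n => ?_)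
    (summable_geometric_of_lt_one hb0 hb1)
  rw [Real.norm_eq_abs, abs_mul, abs_of_nonneg (pow_nonneg hb0 n)]
  exact mul_le_of_le_one_right (pow_nonneg hb0 n) (Real.abs_cos_le_one _)

set_option maxHeartbeats 1000000 in
private lemma weier_key (a : ℕ) (b : ℝ) (ha_odd : Odd a) (ha : 1 < a)
    (hb0 : 0 < b) (hb1 : b < 1) (hab : 1 + 3 * Real.pi / 2 < (a : ℝ) * b)
    (x : ℝ) (m : ℕ) :
    ∃ y : ℝ, y ≠ x ∧ |y - x| ≤ 3/2 / (a:ℝ)^m ∧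
      ((a:ℝ)*b)^m * (2/3 - Real.pi/((a:ℝ)*b - 1)) ≤
        |((∑' n : ℕ, b ^ n * Real.cos ((a : ℝ) ^ n * Real.pi * y)) -
          ∑' n : ℕ, b ^ n * Real.cos ((a : ℝ) ^ n * Real.pi * x)) / (y - x)| := by
  have ha0 : (0:ℝ) < a := by exact_mod_cast Nat.lt_of_lt_of_le Nat.zero_lt_one ha.le
  have ham : (0:ℝ) < (a:ℝ)^m := pow_pos ha0 m
  have haZ : Odd ((a:ℤ)) := by exact_mod_cast ha_odd
  set α : ℤ := round ((a:ℝ)^m * x) with hαdef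
  set x1 : ℝ := (a:ℝ)^m * x - α with hx1def
  have hx1 : |x1| ≤ 1/2 := abs_sub_round ((a:ℝ)^m * x)
  have hx1' := abs_le.1 hx1
  set y : ℝ := ((α:ℝ) - 1) / (a:ℝ)^m with hydef
  have hxy : x - y = (x1 + 1)/(a:ℝ)^m := by
    rw [hydef, hx1def]; field_simp; ring
  have hx1pos : 0 < x1 + 1 := by linarith [hx1'.1]
  have hx1le : x1 + 1 ≤ 3/2 := by linarith [hx1'.2]
  have hD : 0 < x - y := by rw [hxy]; positivity
  have hyne : y ≠ x := by intro h; rw [h, sub_self] at hD; exact lt_irrefl 0 hD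
  refine ⟨y, hyne, ?_, ?_⟩
  · rw [abs_sub_comm, abs_of_pos hD, hxy]
    gcongr
  -- main estimate
  set A : ℝ := (a:ℝ)*b with hAdef
  have hA1 : 1 < A := by nlinarith [Real.pi_pos]
  have hA0 : 0 < A - 1 := by linarith
  set D : ℝ := x - y with hDdef
  -- summability
  have hsy := weier_summable hb0.le hb1 (fun n => (a:ℝ)^n * Real.pi * y)
  have hsx := weier_summable hb0.le hb1 (fun n => (a:ℝ)^n * Real.pi * x)
  have hdiffsum : Summable (fun n => b^n * Real.cos ((a:ℝ)^n*Real.pi*y)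
      - b^n * Real.cos ((a:ℝ)^n*Real.pi*x)) := hsy.sub hsx
  -- tail term identity
  have hterm : ∀ k : ℕ,
      b^(k+m) * Real.cos ((a:ℝ)^(k+m)*Real.pi*y) - b^(k+m)*Real.cos ((a:ℝ)^(k+m)*Real.pi*x)
        = (-((-1:ℝ)^α) * b^m) * (b^k * (1 + Real.cos ((a:ℝ)^k * Real.pi * x1))) := by
    intro k
    have hodd' : Odd ((a:ℤ)^k) := haZ.pow
    have hy1 : (a:ℝ)^(k+m) * Real.pi * y = (((a:ℤ)^k * (α - 1) : ℤ) : ℝ) * Real.pi := by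
      rw [hydef]; push_cast; rw [pow_add]; field_simp
    have hcy : Real.cos ((a:ℝ)^(k+m)*Real.pi*y) = -(-1:ℝ)^α := by
      rw [hy1, cos_int_pi', neg_one_zpow_odd_mul' hodd',
        zpow_sub₀ (by norm_num : (-1:ℝ) ≠ 0), zpow_one, div_neg, div_one]
    have hxeq : (a:ℝ)^m * x = x1 + α := by rw [hx1def]; ring
    have hx2 : (a:ℝ)^(k+m)*Real.pi*x
        = (a:ℝ)^k * Real.pi * x1 + (((a:ℤ)^k * α : ℤ):ℝ) * Real.pi := by
      push_cast
      linear_combination ((a:ℝ)^k * Real.pi) * hxeq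
    have hcx : Real.cos ((a:ℝ)^(k+m)*Real.pi*x)
        = (-1:ℝ)^α * Real.cos ((a:ℝ)^k*Real.pi*x1) := by
      rw [hx2, cos_add_int_pi', neg_one_zpow_odd_mul' hodd']
    rw [hcy, hcx, pow_add]; ring
  -- the nonneg series S
  have hSnonneg : ∀ k : ℕ, 0 ≤ b^k * (1 + Real.cos ((a:ℝ)^k*Real.pi*x1)) := by
    intro k
    have := Real.neg_one_le_cos ((a:ℝ)^k*Real.pi*x1)
    have := pow_nonneg hb0.le k
    nlinarith
  have hS : Summable (fun k => b^k * (1 + Real.cos ((a:ℝ)^k*Real.pi*x1))) := by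
    apply Summable.of_nonneg_of_le hSnonneg (fun k => ?_)
      ((summable_geometric_of_lt_one hb0.le hb1).mul_left 2)
    have h1 : 1 + Real.cos ((a:ℝ)^k*Real.pi*x1) ≤ 2 := by
      nlinarith [Real.cos_le_one ((a:ℝ)^k*Real.pi*x1)]
    calc b^k * (1 + Real.cos ((a:ℝ)^k*Real.pi*x1)) ≤ b^k * 2 :=
          mul_le_mul_of_nonneg_left h1 (pow_nonneg hb0.le k)
    _ = 2 * b^k := mul_comm _ _
  set S : ℝ := ∑' k, b^k * (1 + Real.cos ((a:ℝ)^k*Real.pi*x1)) with hSdef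
  have hS1 : 1 ≤ S := by
    have hcos0 : 0 ≤ Real.cos ((a:ℝ)^0*Real.pi*x1) := by
      apply Real.cos_nonneg_of_mem_Icc
      constructor <;> [nlinarith [Real.pi_pos, hx1'.1]; nlinarith [Real.pi_pos, hx1'.2]]
    have h0 : (1:ℝ) ≤ b^0 * (1 + Real.cos ((a:ℝ)^0*Real.pi*x1)) := by
      rw [pow_zero, one_mul]; linarith
    exact h0.trans (hS.le_tsum 0 (fun i _ => hSnonneg i))
  have hSpos : 0 ≤ S := by linarith
  -- split
  set Δ : ℝ := (∑' n : ℕ, b ^ n * Real.cos ((a : ℝ) ^ n * Real.pi * y)) -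
      ∑' n : ℕ, b ^ n * Real.cos ((a : ℝ) ^ n * Real.pi * x) with hΔdef
  set H : ℝ := ∑ i ∈ Finset.range m,
      (b^i * Real.cos ((a:ℝ)^i*Real.pi*y) - b^i * Real.cos ((a:ℝ)^i*Real.pi*x)) with hHdef
  have hsplit : Δ = H + (-((-1:ℝ)^α) * b^m) * S := by
    rw [hΔdef, ← hsy.tsum_sub hsx, ← hdiffsum.sum_add_tsum_nat_add m, hHdef]
    congr 1
    rw [hSdef, ← tsum_mul_left]
    exact tsum_congr hterm
  -- bound on head
  set G : ℝ := ∑ i ∈ Finset.range m, A^i with hGdef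
  have hGnonneg : 0 ≤ G := Finset.sum_nonneg (fun i _ => pow_nonneg (by linarith) i)
  have hhead : |H| ≤ Real.pi * D * G := by
    rw [hHdef, hGdef, Finset.mul_sum]
    refine (Finset.abs_sum_le_sum_abs _ _).trans (Finset.sum_le_sum fun i _ => ?_)
    rw [← mul_sub, abs_mul, abs_of_nonneg (pow_nonneg hb0.le i)]
    have hlip := cos_lip' ((a:ℝ)^i*Real.pi*y) ((a:ℝ)^i*Real.pi*x)
    have harg : |(a:ℝ)^i*Real.pi*y - (a:ℝ)^i*Real.pi*x| = (a:ℝ)^i * Real.pi * D := by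
      rw [show (a:ℝ)^i*Real.pi*y - (a:ℝ)^i*Real.pi*x = -((a:ℝ)^i*Real.pi*(x-y)) by ring,
        abs_neg, abs_of_nonneg (by positivity)]
    calc b^i * |Real.cos ((a:ℝ)^i*Real.pi*y) - Real.cos ((a:ℝ)^i*Real.pi*x)|
        ≤ b^i * ((a:ℝ)^i * Real.pi * D) := by
          refine mul_le_mul_of_nonneg_left ?_ (pow_nonneg hb0.le i)
          rw [← harg]; exact hlip
    _ = Real.pi * D * A^i := by rw [hAdef, mul_pow]; ring
  have hGle : G ≤ A^m/(A-1) := by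
    rw [hGdef, geom_sum_eq hA1.ne' m]
    gcongr
    linarith
  -- |Δ| ≥ b^m S - |H|
  have habs1 : |(-((-1:ℝ)^α) * b^m) * S| = b^m * S := by
    have h1 : |((-1):ℝ)^α| = 1 := by
      rcases Int.even_or_odd α with h | h
      · rw [h.neg_one_zpow, abs_one]
      · rw [h.neg_one_zpow, abs_neg, abs_one]
    rw [abs_mul, abs_mul, abs_neg, h1, one_mul,
      abs_of_nonneg (pow_nonneg hb0.le m), abs_of_nonneg hSpos]
  have htri : |(-((-1:ℝ)^α) * b^m) * S| ≤ |Δ| + |H| := by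
    have hce : (-((-1:ℝ)^α) * b^m) * S = Δ + -H := by rw [hsplit]; ring
    rw [hce]
    exact (abs_add_le Δ (-H)).trans_eq (by rw [abs_neg])
  have hΔlb : b^m * S - |H| ≤ |Δ| := by rw [← habs1]; linarith
  -- finish
  have hyx : |y - x| = D := by rw [abs_sub_comm, hDdef, abs_of_pos hD]
  rw [abs_div, hyx]
  rw [le_div_iff₀ hD]
  have hAmD : A^m * D = b^m * (x1+1) := by
    rw [hxy, hAdef, mul_pow]; field_simp
  have step1 : A^m * (2/3 - Real.pi/(A-1)) * D
      = (2/3)*(A^m*D) - Real.pi*D*(A^m/(A-1)) := by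
    have hAne : A - 1 ≠ 0 := ne_of_gt hA0
    field_simp
  have step2 : Real.pi*D*G ≤ Real.pi*D*(A^m/(A-1)) :=
    mul_le_mul_of_nonneg_left hGle (by positivity)
  have step3 : (2/3)*(A^m*D) ≤ b^m * S := by
    rw [hAmD]
    calc (2/3:ℝ)*(b^m*(x1+1)) ≤ (2/3)*(b^m*(3/2)) := by
          exact mul_le_mul_of_nonneg_left
            (mul_le_mul_of_nonneg_left hx1le (pow_nonneg hb0.le m)) (by norm_num)
    _ = b^m := by ring
    _ ≤ b^m * S := le_mul_of_one_le_right (pow_nonneg hb0.le m) hS1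
  calc A^m * (2/3 - Real.pi/(A-1)) * D
      = 2/3*(A^m*D) - Real.pi*D*(A^m/(A-1)) := step1
    _ ≤ b^m*S - Real.pi*D*G := by linarith [step2, step3]
    _ ≤ b^m*S - |H| := by linarith [hhead]
    _ ≤ |Δ| := hΔlb

/-- The Weierstrass function `f(x) = ∑_{n ≥ 0} bⁿ cos(aⁿ π x)`, with `a` an odd integer
`> 1`, `0 < b < 1` and `ab > 1 + 3π/2`, is continuous on `ℝ` but nowhere differentiable. -/
theorem weierstrass_nowhere_differentiable (a : ℕ) (b : ℝ)
    (ha_odd : Odd a) (ha : 1 < a) (hb0 : 0 < b) (hb1 : b < 1)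
    (hab : 1 + 3 * Real.pi / 2 < (a : ℝ) * b) :
    Continuous (fun x : ℝ => ∑' n : ℕ, b ^ n * Real.cos ((a : ℝ) ^ n * Real.pi * x)) ∧
      ∀ x : ℝ, ¬ DifferentiableAt ℝ
        (fun x : ℝ => ∑' n : ℕ, b ^ n * Real.cos ((a : ℝ) ^ n * Real.pi * x)) x := by
  constructor
  · apply continuous_tsum (f := fun n (x:ℝ) => b ^ n * Real.cos ((a : ℝ) ^ n * Real.pi * x))
      (u := fun n => b ^ n) (fun n => by fun_prop)
      (summable_geometric_of_lt_one hb0.le hb1)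
    intro n x
    rw [Real.norm_eq_abs, abs_mul, abs_of_nonneg (pow_nonneg hb0.le n)]
    exact mul_le_of_le_one_right (pow_nonneg hb0.le n) (Real.abs_cos_le_one _)
  · intro x hdiff
    have ha1 : (1:ℝ) < a := by exact_mod_cast ha
    set F := fun x : ℝ => ∑' n : ℕ, b ^ n * Real.cos ((a : ℝ) ^ n * Real.pi * x) with hF
    have hL := hdiff.hasDerivAt
    set L := deriv F x with hLdef
    rw [hasDerivAt_iff_tendsto_slope] at hL
    choose y hyne hyclose hybound using fun m => weier_key a b ha_odd ha hb0 hb1 hab x m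
    have htendsto : Tendsto y atTop (𝓝 x) := by
      have h0 : Tendsto (fun m : ℕ => (3:ℝ)/2 / (a:ℝ)^m) atTop (𝓝 0) :=
        Tendsto.div_atTop tendsto_const_nhds (tendsto_pow_atTop_atTop_of_one_lt ha1)
      rw [tendsto_iff_dist_tendsto_zero]
      exact squeeze_zero (fun m => dist_nonneg)
        (fun m => le_of_eq_of_le (Real.dist_eq _ _) (hyclose m)) h0
    have hmem : Tendsto y atTop (𝓝[≠] x) := by
      refine tendsto_nhdsWithin_iff.2 ⟨htendsto, Eventually.of_forall (fun m => ?_)⟩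
      simp [hyne m]
    have hslope : Tendsto (fun m => slope F x (y m)) atTop (𝓝 L) := hL.comp hmem
    have habs : Tendsto (fun m => |slope F x (y m)|) atTop (𝓝 |L|) := hslope.abs
    have hev1 : ∀ᶠ m in atTop, |slope F x (y m)| < |L| + 1 :=
      habs.eventually_lt_const (lt_add_one |L|)
    set A : ℝ := (a:ℝ)*b with hAdef
    have hA1 : 1 < A := by nlinarith [Real.pi_pos]
    have hε : 0 < 2/3 - Real.pi/(A-1) := by
      have h2 : 0 < A - 1 := by linarith
      rw [sub_pos, div_lt_iff₀ h2]
      nlinarith [Real.pi_pos]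
    have hinf : Tendsto (fun m : ℕ => A^m * (2/3 - Real.pi/(A-1))) atTop atTop :=
      (tendsto_pow_atTop_atTop_of_one_lt hA1).atTop_mul_const hε
    have hev2 : ∀ᶠ m in atTop, |L| + 1 < A^m * (2/3 - Real.pi/(A-1)) :=
      hinf.eventually_gt_atTop _
    obtain ⟨m, h1, h2⟩ := (hev1.and hev2).exists
    have h3 := hybound m
    rw [slope_def_field] at h1
    simp only [hF] at h1
    linarith
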